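/- Lagrange–Jacobi identity for planar Kepler-Heisenberg motion: if c is a solution with z(t) = 0 and p_z(t) = 0 for all t, and H₀ denotes its (constant) energy, then the function f(t) = x(t)² + y(t)² satisfies f''(t) = 4H₀ at every time; consequently f(t) = 2H₀·(t − t₀)² + f'(t₀)·(t − t₀) + f(t₀) for any fixed t₀, so the squared radial distance is a quadratic polynomial in time whose leading coefficient has the sign of the energy. -/

import Mathlib

/-- `P_X = p_x - (1/2) y p_z`, where phase space coordinates are
`(x, y, z, p_x, p_y, p_z) = (p 0, p 1, p 2, p 3, p 4, p 5)`. -/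
noncomputable def PX (p : Fin 6 → ℝ) : ℝ := p 3 - (1/2) * p 1 * p 5

/-- `P_Y = p_y + (1/2) x p_z`. -/
noncomputable def PY (p : Fin 6 → ℝ) : ℝ := p 4 + (1/2) * p 0 * p 5

/-- `Q = (x² + y²)² + 16 z²`. -/
noncomputable def Qf (p : Fin 6 → ℝ) : ℝ := ((p 0)^2 + (p 1)^2)^2 + 16 * (p 2)^2

/-- The Kepler–Heisenberg Hamiltonian `H = (1/2)(P_X² + P_Y²) - (1/(8π)) Q^{-1/2}`. -/
noncomputable def Ham (p : Fin 6 → ℝ) : ℝ :=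
  (1/2) * ((PX p)^2 + (PY p)^2) - (1/(8*Real.pi)) * (Qf p) ^ (-(1/2) : ℝ)

/-- A solution of the Kepler–Heisenberg system: a differentiable curve on an open
interval (open preconnected set) `I`, whose position component never vanishes, and
which satisfies Hamilton's equations for `Ham`. -/
def IsSolutionOn (c : ℝ → Fin 6 → ℝ) (I : Set ℝ) : Prop :=
  IsOpen I ∧ IsPreconnected I ∧
  ∀ t ∈ I,
    (¬ (c t 0 = 0 ∧ c t 1 = 0 ∧ c t 2 = 0)) ∧
    HasDerivAt (fun τ => c τ 0) (fderiv ℝ Ham (c t) (Pi.single 3 1)) t ∧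
    HasDerivAt (fun τ => c τ 1) (fderiv ℝ Ham (c t) (Pi.single 4 1)) t ∧
    HasDerivAt (fun τ => c τ 2) (fderiv ℝ Ham (c t) (Pi.single 5 1)) t ∧
    HasDerivAt (fun τ => c τ 3) (-(fderiv ℝ Ham (c t) (Pi.single 0 1))) t ∧
    HasDerivAt (fun τ => c τ 4) (-(fderiv ℝ Ham (c t) (Pi.single 1 1))) t ∧
    HasDerivAt (fun τ => c τ 5) (-(fderiv ℝ Ham (c t) (Pi.single 2 1))) t

lemma ham_differentiableAt {p : Fin 6 → ℝ} (hQ : Qf p ≠ 0) : DifferentiableAt ℝ Ham p := by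
  have h : ∀ i, DifferentiableAt ℝ (fun q : Fin 6 → ℝ => q i) p := fun i =>
    differentiableAt_apply i p
  have hPX : DifferentiableAt ℝ PX p := (h 3).sub (((h 1).const_mul (1/2)).mul (h 5))
  have hPY : DifferentiableAt ℝ PY p := (h 4).add (((h 0).const_mul (1/2)).mul (h 5))
  have hQf : DifferentiableAt ℝ Qf p :=
    ((((h 0).pow 2).add ((h 1).pow 2)).pow 2).add (((h 2).pow 2).const_mul 16)
  exact (((hPX.pow 2).add (hPY.pow 2)).const_mul (1/2)).sub
    ((hQf.rpow_const (Or.inl hQ)).const_mul (1/(8*Real.pi)))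

lemma fderiv_ham_line {p : Fin 6 → ℝ} (hQ : Qf p ≠ 0) (v : Fin 6 → ℝ) :
    HasDerivAt (fun s : ℝ => Ham (p + s • v)) (fderiv ℝ Ham p v) 0 := by
  have hd := (ham_differentiableAt hQ).hasFDerivAt
  have hline : HasDerivAt (fun s : ℝ => p + s • v) v 0 := by
    simpa using ((hasDerivAt_id (0:ℝ)).smul_const v).const_add p
  exact hd.comp_hasDerivAt_of_eq 0 hline (by simp)

lemma sq_rpow {S : ℝ} (hS : 0 < S) (r : ℝ) : (S^2) ^ r = S ^ (2*r) := by
  rw [← Real.rpow_natCast S 2, ← Real.rpow_mul hS.le]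
  norm_num

lemma rpow_neg_three {S : ℝ} (hS : 0 < S) : S ^ (-3:ℝ) = (S^3)⁻¹ := by
  rw [show (-3:ℝ) = ((-3:ℤ):ℝ) by norm_num, Real.rpow_intCast]
  simp [zpow_neg]

lemma rpow_neg_one' {S : ℝ} (hS : 0 < S) : S ^ (-1:ℝ) = S⁻¹ := by
  rw [show (-1:ℝ) = ((-1:ℤ):ℝ) by norm_num, Real.rpow_intCast]
  simp

lemma planar_energy {p : Fin 6 → ℝ} (h2 : p 2 = 0) (h5 : p 5 = 0)
    (hs : 0 < (p 0)^2 + (p 1)^2) :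
    Ham p = (1/2) * ((p 3)^2 + (p 4)^2)
      - (1/(8*Real.pi)) * ((p 0)^2 + (p 1)^2)⁻¹ := by
  have hQ : Qf p = ((p 0)^2 + (p 1)^2)^2 := by simp [Qf, h2]
  rw [Ham, hQ, sq_rpow hs, show (2:ℝ) * (-(1/2)) = -1 by norm_num, rpow_neg_one' hs]
  simp [PX, PY, h5]

lemma planar_partials {p : Fin 6 → ℝ} (h2 : p 2 = 0) (h5 : p 5 = 0)
    (hs : 0 < (p 0)^2 + (p 1)^2) :
    fderiv ℝ Ham p (Pi.single 3 1) = p 3 ∧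
    fderiv ℝ Ham p (Pi.single 4 1) = p 4 ∧
    fderiv ℝ Ham p (Pi.single 0 1) = p 0 / (4*Real.pi*((p 0)^2+(p 1)^2)^2) ∧
    fderiv ℝ Ham p (Pi.single 1 1) = p 1 / (4*Real.pi*((p 0)^2+(p 1)^2)^2) := by
  have hQ : Qf p = ((p 0)^2 + (p 1)^2)^2 := by simp [Qf, h2]
  have hQne : Qf p ≠ 0 := by rw [hQ]; positivity
  have hπ : Real.pi ≠ 0 := Real.pi_ne_zero
  have hSne : (p 0)^2 + (p 1)^2 ≠ 0 := ne_of_gt hs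
  refine ⟨?_, ?_, ?_, ?_⟩
  · have e : (fun s : ℝ => Ham (p + s • (Pi.single 3 1 : Fin 6 → ℝ))) =
        fun s => (1/2) * ((p 3 + s)^2 + (p 4)^2)
          - (1/(8*Real.pi)) * (Qf p) ^ (-(1/2):ℝ) := by
      funext s
      simp [Ham, PX, PY, Qf, h5, h2, Pi.single_apply]
    have h1 : HasDerivAt (fun s : ℝ => (1/2) * ((p 3 + s)^2 + (p 4)^2)
        - (1/(8*Real.pi)) * (Qf p) ^ (-(1/2):ℝ)) (p 3) 0 := by
      have := (((((hasDerivAt_id (0:ℝ)).const_add (p 3)).pow 2).add_const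
        ((p 4)^2)).const_mul (1/2)).sub_const ((1/(8*Real.pi)) * (Qf p) ^ (-(1/2):ℝ))
      refine this.congr_deriv ?_
      push_cast
      simp
    have key := fderiv_ham_line hQne (Pi.single 3 1)
    rw [e] at key
    exact key.unique h1
  · have e : (fun s : ℝ => Ham (p + s • (Pi.single 4 1 : Fin 6 → ℝ))) =
        fun s => (1/2) * ((p 3)^2 + (p 4 + s)^2)
          - (1/(8*Real.pi)) * (Qf p) ^ (-(1/2):ℝ) := by
      funext s
      simp [Ham, PX, PY, Qf, h5, h2, Pi.single_apply]
    have h1 : HasDerivAt (fun s : ℝ => (1/2) * ((p 3)^2 + (p 4 + s)^2)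
        - (1/(8*Real.pi)) * (Qf p) ^ (-(1/2):ℝ)) (p 4) 0 := by
      have := (((((hasDerivAt_id (0:ℝ)).const_add (p 4)).pow 2).const_add
        ((p 3)^2)).const_mul (1/2)).sub_const ((1/(8*Real.pi)) * (Qf p) ^ (-(1/2):ℝ))
      refine this.congr_deriv ?_
      push_cast
      simp
    have key := fderiv_ham_line hQne (Pi.single 4 1)
    rw [e] at key
    exact key.unique h1
  · have e : (fun s : ℝ => Ham (p + s • (Pi.single 0 1 : Fin 6 → ℝ))) =
        fun s => (1/2) * ((p 3)^2 + (p 4)^2)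
          - (1/(8*Real.pi)) * (((p 0 + s)^2 + (p 1)^2)^2) ^ (-(1/2):ℝ) := by
      funext s
      simp [Ham, PX, PY, Qf, h5, h2, Pi.single_apply]
    have hu : HasDerivAt (fun s : ℝ => ((p 0 + s)^2 + (p 1)^2)^2)
        ((2:ℕ) * ((p 0 + 0)^2 + (p 1)^2)^(2-1) * ((2:ℕ) * (p 0 + 0)^(2-1) * 1)) 0 :=
      ((((hasDerivAt_id (0:ℝ)).const_add (p 0)).pow 2).add_const ((p 1)^2)).pow 2
    have hune : ((p 0 + (0:ℝ))^2 + (p 1)^2)^2 ≠ 0 := by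
      simpa using pow_ne_zero 2 hSne
    have h1 := ((hu.rpow_const (p := (-(1/2):ℝ)) (Or.inl hune)).const_mul (1/(8*Real.pi))).const_sub
      ((1/2) * ((p 3)^2 + (p 4)^2))
    have h2' : HasDerivAt (fun s : ℝ => (1/2) * ((p 3)^2 + (p 4)^2)
        - (1/(8*Real.pi)) * (((p 0 + s)^2 + (p 1)^2)^2) ^ (-(1/2):ℝ))
        (p 0 / (4*Real.pi*((p 0)^2+(p 1)^2)^2)) 0 := by
      refine h1.congr_deriv ?_
      rw [add_zero, sq_rpow hs, show (2:ℝ) * (-(1/2) - 1) = -3 by norm_num,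
        rpow_neg_three hs]
      push_cast
      field_simp
      ring
    have key := fderiv_ham_line hQne (Pi.single 0 1)
    rw [e] at key
    exact key.unique h2'
  · have e : (fun s : ℝ => Ham (p + s • (Pi.single 1 1 : Fin 6 → ℝ))) =
        fun s => (1/2) * ((p 3)^2 + (p 4)^2)
          - (1/(8*Real.pi)) * (((p 0)^2 + (p 1 + s)^2)^2) ^ (-(1/2):ℝ) := by
      funext s
      simp [Ham, PX, PY, Qf, h5, h2, Pi.single_apply]
    have hu : HasDerivAt (fun s : ℝ => ((p 0)^2 + (p 1 + s)^2)^2)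
        ((2:ℕ) * ((p 0)^2 + (p 1 + 0)^2)^(2-1) * ((2:ℕ) * (p 1 + 0)^(2-1) * 1)) 0 :=
      ((((hasDerivAt_id (0:ℝ)).const_add (p 1)).pow 2).const_add ((p 0)^2)).pow 2
    have hune : ((p 0)^2 + (p 1 + (0:ℝ))^2)^2 ≠ 0 := by
      simpa using pow_ne_zero 2 hSne
    have h1 := ((hu.rpow_const (p := (-(1/2):ℝ)) (Or.inl hune)).const_mul (1/(8*Real.pi))).const_sub
      ((1/2) * ((p 3)^2 + (p 4)^2))
    have h2' : HasDerivAt (fun s : ℝ => (1/2) * ((p 3)^2 + (p 4)^2)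
        - (1/(8*Real.pi)) * (((p 0)^2 + (p 1 + s)^2)^2) ^ (-(1/2):ℝ))
        (p 1 / (4*Real.pi*((p 0)^2+(p 1)^2)^2)) 0 := by
      refine h1.congr_deriv ?_
      rw [add_zero, sq_rpow hs, show (2:ℝ) * (-(1/2) - 1) = -3 by norm_num,
        rpow_neg_three hs]
      push_cast
      field_simp
      ring
    have key := fderiv_ham_line hQne (Pi.single 1 1)
    rw [e] at key
    exact key.unique h2'

lemma const_of_hasDerivAt_zero {I : Set ℝ} (hI : IsOpen I) (hpc : IsPreconnected I)
    {g : ℝ → ℝ} (hg : ∀ t ∈ I, HasDerivAt g 0 t) {a b : ℝ} (ha : a ∈ I) (hb : b ∈ I) :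
    g a = g b := by
  by_contra hne
  set U : Set ℝ := {t | t ∈ I ∧ g t = g a} with hU
  set V : Set ℝ := {t | t ∈ I ∧ g t ≠ g a} with hV
  have hUopen : IsOpen U := by
    rw [isOpen_iff_mem_nhds]
    rintro t ⟨htI, hgt⟩
    obtain ⟨ε, hε, hball⟩ := Metric.isOpen_iff.1 hI t htI
    have hconst : ∀ u ∈ Metric.ball t ε, g u = g t := by
      intro u hu
      refine Convex.is_const_of_fderivWithin_eq_zero (𝕜 := ℝ) (convex_ball t ε) ?_ ?_ hu
        (Metric.mem_ball_self hε)
      · intro x hx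
        exact ((hg x (hball hx)).differentiableAt).differentiableWithinAt
      · intro x hx
        rw [fderivWithin_of_isOpen Metric.isOpen_ball hx,
          (hg x (hball hx)).hasFDerivAt.fderiv]
        ext y
        simp
    exact Filter.mem_of_superset (Metric.ball_mem_nhds t hε)
      (fun u hu => ⟨hball hu, (hconst u hu).trans hgt⟩)
  have hVopen : IsOpen V := by
    rw [isOpen_iff_mem_nhds]
    rintro t ⟨htI, hgt⟩
    have hcont := (hg t htI).differentiableAt.continuousAt
    filter_upwards [hI.mem_nhds htI, hcont.eventually_ne hgt] with u h1 h2
    exact ⟨h1, h2⟩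
  have hcover : I ⊆ U ∪ V := fun t ht => by
    by_cases h : g t = g a
    · exact Or.inl ⟨ht, h⟩
    · exact Or.inr ⟨ht, h⟩
  obtain ⟨x, -, ⟨-, h1⟩, ⟨-, h2⟩⟩ :=
    hpc U V hUopen hVopen hcover ⟨a, ha, ha, rfl⟩ ⟨b, hb, hb, fun h => hne h.symm⟩
  exact h2 h1

/-- Lagrange–Jacobi identity for planar Kepler–Heisenberg motion: along a solution with
`z ≡ 0` and `p_z ≡ 0` of constant energy `H₀`, the function `f = x² + y²` satisfies
`f'' = 4 H₀`; consequently `f(t) = 2H₀(t-t₀)² + f'(t₀)(t-t₀) + f(t₀)`. -/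
theorem kh_lagrange_jacobi (c : ℝ → Fin 6 → ℝ) (I : Set ℝ) (H0 : ℝ)
    (hc : IsSolutionOn c I)
    (hz : ∀ t ∈ I, c t 2 = 0) (hpz : ∀ t ∈ I, c t 5 = 0)
    (hE : ∀ t ∈ I, Ham (c t) = H0) :
    (∀ t ∈ I,
      HasDerivAt (deriv (fun τ => (c τ 0)^2 + (c τ 1)^2)) (4 * H0) t) ∧
    ∀ t₀ ∈ I, ∀ t ∈ I,
      (c t 0)^2 + (c t 1)^2 =
        2 * H0 * (t - t₀)^2
          + deriv (fun τ => (c τ 0)^2 + (c τ 1)^2) t₀ * (t - t₀)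
          + ((c t₀ 0)^2 + (c t₀ 1)^2) := by
  obtain ⟨hIopen, hIpre, hsol⟩ := hc
  set f : ℝ → ℝ := fun τ => (c τ 0)^2 + (c τ 1)^2 with hfdef
  have hπ : Real.pi ≠ 0 := Real.pi_ne_zero
  have hS : ∀ t ∈ I, 0 < (c t 0)^2 + (c t 1)^2 := by
    intro t ht
    have hne : ¬(c t 0 = 0 ∧ c t 1 = 0) := fun ⟨h0, h1⟩ =>
      (hsol t ht).1 ⟨h0, h1, hz t ht⟩
    have h0 : 0 ≤ (c t 0)^2 + (c t 1)^2 := by positivity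
    rcases h0.lt_or_eq with h | h
    · exact h
    · exfalso
      apply hne
      constructor
      · have : (c t 0)^2 = 0 := by nlinarith [sq_nonneg (c t 0), sq_nonneg (c t 1)]
        exact pow_eq_zero_iff (by norm_num) |>.1 this
      · have : (c t 1)^2 = 0 := by nlinarith [sq_nonneg (c t 0), sq_nonneg (c t 1)]
        exact pow_eq_zero_iff (by norm_num) |>.1 this
  have hx' : ∀ t ∈ I, HasDerivAt (fun τ => c τ 0) (c t 3) t := by
    intro t ht
    have h := (hsol t ht).2.1
    rwa [(planar_partials (hz t ht) (hpz t ht) (hS t ht)).1] at h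
  have hy' : ∀ t ∈ I, HasDerivAt (fun τ => c τ 1) (c t 4) t := by
    intro t ht
    have h := (hsol t ht).2.2.1
    rwa [(planar_partials (hz t ht) (hpz t ht) (hS t ht)).2.1] at h
  have hpx' : ∀ t ∈ I, HasDerivAt (fun τ => c τ 3)
      (-(c t 0 / (4*Real.pi*((c t 0)^2+(c t 1)^2)^2))) t := by
    intro t ht
    have h := (hsol t ht).2.2.2.2.1
    rwa [(planar_partials (hz t ht) (hpz t ht) (hS t ht)).2.2.1] at h
  have hpy' : ∀ t ∈ I, HasDerivAt (fun τ => c τ 4)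
      (-(c t 1 / (4*Real.pi*((c t 0)^2+(c t 1)^2)^2))) t := by
    intro t ht
    have h := (hsol t ht).2.2.2.2.2.1
    rwa [(planar_partials (hz t ht) (hpz t ht) (hS t ht)).2.2.2] at h
  have hfd : ∀ t ∈ I, HasDerivAt f (2 * c t 0 * c t 3 + 2 * c t 1 * c t 4) t := by
    intro t ht
    have h := ((hx' t ht).pow 2).add ((hy' t ht).pow 2)
    refine h.congr_deriv ?_
    push_cast
    ring
  have hderiv_f : ∀ t ∈ I, deriv f t = 2 * c t 0 * c t 3 + 2 * c t 1 * c t 4 :=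
    fun t ht => (hfd t ht).deriv
  have hsecond : ∀ t ∈ I, HasDerivAt (deriv f) (4 * H0) t := by
    intro t ht
    have hg : HasDerivAt (fun τ => 2 * c τ 0 * c τ 3 + 2 * c τ 1 * c τ 4) (4 * H0) t := by
      have h1 := (((hx' t ht).const_mul 2).mul (hpx' t ht)).add
        (((hy' t ht).const_mul 2).mul (hpy' t ht))
      refine h1.congr_deriv ?_
      have hH : H0 = (1/2) * ((c t 3)^2 + (c t 4)^2)
          - (1/(8*Real.pi)) * ((c t 0)^2 + (c t 1)^2)⁻¹ :=
        (hE t ht).symm.trans (planar_energy (hz t ht) (hpz t ht) (hS t ht))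
      have hSne : (c t 0)^2 + (c t 1)^2 ≠ 0 := ne_of_gt (hS t ht)
      rw [hH]
      field_simp
      ring
    exact hg.congr_of_eventuallyEq
      (Filter.eventuallyEq_of_mem (hIopen.mem_nhds ht) (fun u hu => hderiv_f u hu))
  refine ⟨hsecond, ?_⟩
  intro t₀ ht₀ t ht
  have hF : ∀ u ∈ I, HasDerivAt (fun v => deriv f v - 4*H0*(v - t₀)) 0 u := by
    intro u hu
    have h := (hsecond u hu).sub (((hasDerivAt_id u).sub_const t₀).const_mul (4*H0))
    refine h.congr_deriv ?_
    ring
  have hderiv_eq : ∀ u ∈ I, deriv f u = 4*H0*(u - t₀) + deriv f t₀ := by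
    intro u hu
    have h := const_of_hasDerivAt_zero hIopen hIpre hF hu ht₀
    beta_reduce at h
    linear_combination h
  have hG : ∀ u ∈ I, HasDerivAt
      (fun v => f v - (2*H0*(v-t₀)^2 + deriv f t₀*(v-t₀) + f t₀)) 0 u := by
    intro u hu
    have hq : HasDerivAt (fun v => 2*H0*(v-t₀)^2 + deriv f t₀*(v-t₀) + f t₀)
        (4*H0*(u-t₀) + deriv f t₀) u := by
      have h := ((((hasDerivAt_id u).sub_const t₀).pow 2).const_mul (2*H0)).add
        (((hasDerivAt_id u).sub_const t₀).const_mul (deriv f t₀)) |>.add_const (f t₀)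
      refine h.congr_deriv ?_
      simp only [id_eq]
      push_cast
      ring
    have hfu := hfd u hu
    rw [← hderiv_f u hu] at hfu
    have h := hfu.sub hq
    rw [hderiv_eq u hu] at h
    rw [sub_self] at h
    exact h
  have h := const_of_hasDerivAt_zero hIopen hIpre hG ht ht₀
  have hGt₀ : f t₀ - (2*H0*(t₀-t₀)^2 + deriv f t₀*(t₀-t₀) + f t₀) = 0 := by
    simp
  rw [hGt₀] at h
  have : f t = 2*H0*(t-t₀)^2 + deriv f t₀*(t-t₀) + f t₀ := by
    linear_combination h
  simpa [hfdef] using this
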